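/- arXiv:0903.3892 — 3 statements merged into one kernel-verified Lean document; each statement's English description precedes it below -/
import Mathlib

section
/- Every superlevel set $A_s = \{x \in A : G^A(x) \ge s\}$ of the killed Green function, for $0 < s \le G^A(o)$, is connected and contains the root $o$. -/
open scoped Classical BigOperators

noncomputable def kerPow {V : Type*} (q : V → V → ℝ) : ℕ → V → V → ℝ
  | 0 => fun x y => if x = y then 1 else 0
  | n + 1 => fun x y => ∑' z, kerPow q n x z * q z y

/-- Every superlevel set `A_s = {x ∈ A : G^A(x) ≥ s}` of the killed Green
function, for `0 < s ≤ G^A(o)`, is connected (by edges of positive transition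
probability within `A_s`) and contains the root `o`. -/
theorem statement3 {V : Type*} [Countable V]
    (p : V → V → ℝ) (m : V → ℝ)
    (hp : ∀ x y, 0 ≤ p x y) (hstoch : ∀ x, ∑' y, p x y = 1)
    (hm : ∀ x, 0 < m x) (hrev : ∀ x y, m x * p x y = m y * p y x)
    (A : Set V) (o : V) (ho : o ∈ A)
    (hAconn : ∀ x ∈ A, Relation.ReflTransGen
      (fun a b => a ∈ A ∧ b ∈ A ∧ 0 < p a b) o x)
    (pA : V → V → ℝ) (hpA : ∀ x y, pA x y = if x ∈ A then p x y else 0)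
    (GA : V → ℝ)
    (hGA : ∀ x, GA x = if x ∈ A then (∑' k : ℕ, kerPow pA k o x) / m x else 0)
    (hGfin : ∀ x, Summable fun k : ℕ => kerPow pA k o x)
    (s : ℝ) (hs : 0 < s) (hso : s ≤ GA o) :
    (o ∈ A ∧ s ≤ GA o) ∧
      ∀ x, x ∈ A → s ≤ GA x →
        Relation.ReflTransGen
          (fun a b => (a ∈ A ∧ s ≤ GA a) ∧ (b ∈ A ∧ s ≤ GA b) ∧ 0 < p a b) o x := by
  classical
  set K : ℕ → V → ℝ := fun k z => kerPow pA k o z with hKdef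
  set F : V → ℝ := fun z => ∑' k, K k z with hFdef
  have hKs : ∀ k z, K (k + 1) z = ∑' w, K k w * pA w z := fun k z => rfl
  have hK0 : ∀ z, K 0 z = if o = z then 1 else 0 := fun z => rfl
  -- basic summability of p
  have hpsum : ∀ w, Summable (fun z => p w z) := by
    intro w
    by_contra h
    have h1 := hstoch w
    rw [tsum_eq_zero_of_not_summable h] at h1
    norm_num at h1
  have hple1 : ∀ w z, p w z ≤ 1 := by
    intro w z
    have h1 := Summable.le_tsum (hpsum w) z (fun b _ => hp w b)
    rw [hstoch w] at h1
    exact h1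
  have hpA0 : ∀ w z, 0 ≤ pA w z := by
    intro w z; rw [hpA]; split
    · exact hp w z
    · exact le_rfl
  have hpAle : ∀ w z, pA w z ≤ p w z := by
    intro w z; rw [hpA]; split
    · exact le_rfl
    · exact hp w z
  have hpA1 : ∀ w z, pA w z ≤ 1 := fun w z => (hpAle w z).trans (hple1 w z)
  have hpAsum : ∀ w, Summable (fun z => pA w z) :=
    fun w => Summable.of_nonneg_of_le (hpA0 w) (hpAle w) (hpsum w)
  have hpAtsum : ∀ w, ∑' z, pA w z ≤ 1 := by
    intro w
    have := Summable.tsum_le_tsum (hpAle w) (hpAsum w) (hpsum w)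
    rwa [hstoch w] at this
  have hpAtsum0 : ∀ w, 0 ≤ ∑' z, pA w z := fun w => tsum_nonneg (hpA0 w)
  -- membership facts
  have hpAA : ∀ w z, w ∈ A → pA w z = p w z := by
    intro w z hw; rw [hpA, if_pos hw]
  have hpAmem : ∀ w z, pA w z ≠ 0 → w ∈ A ∧ 0 < p w z := by
    intro w z hne
    rw [hpA] at hne
    by_cases hw : w ∈ A
    · rw [if_pos hw] at hne
      exact ⟨hw, lt_of_le_of_ne (hp w z) (Ne.symm hne)⟩
    · rw [if_neg hw] at hne; exact absurd rfl hne
  -- nonnegativity of K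
  have hKnn : ∀ k z, 0 ≤ K k z := by
    intro k
    induction k with
    | zero => intro z; rw [hK0]; split <;> norm_num
    | succ k ih =>
      intro z; rw [hKs]
      exact tsum_nonneg fun w => mul_nonneg (ih w) (hpA0 w z)
  -- summability of K in the space variable, with mass at most 1
  have hKsum : ∀ k, Summable (fun z => K k z) ∧ ∑' z, K k z ≤ 1 := by
    intro k
    induction k with
    | zero =>
      have h1 : HasSum (fun z => K 0 z) 1 := by
        have := hasSum_ite_eq o (1 : ℝ)
        refine this.congr_fun fun z => ?_
        rw [hK0]
        by_cases h : o = z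
        · rw [if_pos h, if_pos h.symm]
        · rw [if_neg h, if_neg (fun hh => h hh.symm)]
      exact ⟨h1.summable, le_of_eq h1.tsum_eq⟩
    | succ k ih =>
      have hf0 : 0 ≤ fun q : V × V => K k q.1 * pA q.1 q.2 :=
        fun q => mul_nonneg (hKnn k q.1) (hpA0 q.1 q.2)
      have hslice : ∀ w, Summable fun z => K k w * pA w z :=
        fun w => (hpAsum w).mul_left (K k w)
      have hmarg : Summable fun w => ∑' z, K k w * pA w z := by
        refine Summable.of_nonneg_of_le (fun w => tsum_nonneg fun z => hf0 (w, z))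
          (fun w => ?_) ih.1
        rw [tsum_mul_left]
        exact mul_le_of_le_one_right (hKnn k w) (hpAtsum w)
      have hprod : Summable (fun q : V × V => K k q.1 * pA q.1 q.2) :=
        (summable_prod_of_nonneg hf0).mpr ⟨hslice, hmarg⟩
      have hswap : Summable (fun q : V × V => K k q.2 * pA q.2 q.1) := by
        have := hprod.prod_symm
        exact this.congr fun q => rfl
      have hsumm : Summable (fun z => K (k + 1) z) := by
        have h2 := ((summable_prod_of_nonneg
          (fun q : V × V => hf0 (q.2, q.1))).mp hswap).2
        refine h2.congr fun z => ?_
        rw [hKs]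
      refine ⟨hsumm, ?_⟩
      have hcomm : ∑' z, ∑' w, K k w * pA w z = ∑' w, ∑' z, K k w * pA w z :=
        Summable.tsum_comm (f := fun w z => K k w * pA w z) hprod
      calc ∑' z, K (k + 1) z = ∑' z, ∑' w, K k w * pA w z := by
            exact tsum_congr fun z => hKs k z
        _ = ∑' w, ∑' z, K k w * pA w z := hcomm
        _ ≤ ∑' w, K k w := by
            refine Summable.tsum_le_tsum (fun w => ?_) hmarg ih.1
            rw [tsum_mul_left]
            exact mul_le_of_le_one_right (hKnn k w) (hpAtsum w)
        _ ≤ 1 := ih.2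
  have hKmulS : ∀ k z, Summable fun w => K k w * pA w z := by
    intro k z
    refine Summable.of_nonneg_of_le (fun w => mul_nonneg (hKnn k w) (hpA0 w z))
      (fun w => ?_) (hKsum k).1
    exact mul_le_of_le_one_right (hKnn k w) (hpA1 w z)
  -- facts about F and GA
  have hFnn : ∀ z, 0 ≤ F z := fun z => tsum_nonneg fun k => hKnn k z
  have hFA : ∀ z, z ∈ A → F z = m z * GA z := by
    intro z hz
    rw [hGA z, if_pos hz]
    rw [mul_div_cancel₀ _ (hm z).ne']
  have hGA0 : ∀ z, z ∉ A → GA z = 0 := by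
    intro z hz; rw [hGA z, if_neg hz]
  have hAs_mem : ∀ w, s ≤ GA w → w ∈ A := by
    intro w hw
    by_contra h
    rw [hGA0 w h] at hw
    linarith
  have hpos_symm : ∀ a b, 0 < p a b → 0 < p b a := by
    intro a b hab
    have h1 := hrev a b
    nlinarith [hm a, hm b, hp b a]
  -- the bad set U
  set U : V → Prop := fun z => s ≤ GA z ∧
    ¬ Relation.ReflTransGen
      (fun a b => (a ∈ A ∧ s ≤ GA a) ∧ (b ∈ A ∧ s ≤ GA b) ∧ 0 < p a b) o z with hUdef
  have hUne : ∀ z, U z → z ≠ o := by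
    rintro z hz rfl
    exact hz.2 Relation.ReflTransGen.refl
  have hExit : ∀ z w, U z → 0 < p w z → ¬ U w → GA w < s := by
    intro z w hz hpwz hUw
    by_contra hc
    push_neg at hc
    have hwA : w ∈ A := hAs_mem w hc
    have hzA : z ∈ A := hAs_mem z hz.1
    have hReachw : Relation.ReflTransGen
        (fun a b => (a ∈ A ∧ s ≤ GA a) ∧ (b ∈ A ∧ s ≤ GA b) ∧ 0 < p a b) o w := by
      by_contra hr
      exact hUw ⟨hc, hr⟩
    exact hz.2 (hReachw.tail ⟨⟨hwA, hc⟩, ⟨hzA, hz.1⟩, hpwz⟩)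
  -- the maximum-principle bound, by induction on the number of steps
  have hMain : ∀ n z, U z → ∑ k ∈ Finset.range n, K k z ≤ s * m z := by
    intro n
    induction n with
    | zero =>
      intro z _
      simp only [Finset.range_zero, Finset.sum_empty]
      exact mul_nonneg hs.le (hm z).le
    | succ n ih =>
      intro z hz
      rw [Finset.sum_range_succ']
      have hz0 : K 0 z = 0 := by
        rw [hK0, if_neg (fun h => (hUne z hz) h.symm)]
      rw [hz0, add_zero]
      have hswapsum : ∑ k ∈ Finset.range n, K (k + 1) z
          = ∑' w, (∑ k ∈ Finset.range n, K k w) * pA w z := by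
        calc ∑ k ∈ Finset.range n, K (k + 1) z
            = ∑ k ∈ Finset.range n, ∑' w, K k w * pA w z :=
              Finset.sum_congr rfl fun k _ => hKs k z
          _ = ∑' w, ∑ k ∈ Finset.range n, K k w * pA w z :=
              (Summable.tsum_finsetSum fun k _ => hKmulS k z).symm
          _ = ∑' w, (∑ k ∈ Finset.range n, K k w) * pA w z :=
              tsum_congr fun w => (Finset.sum_mul _ _ _).symm
      rw [hswapsum]
      have hterm : ∀ w, (∑ k ∈ Finset.range n, K k w) * pA w z ≤ s * m z * p z w := by
        intro w
        by_cases hne : pA w z = 0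
        · rw [hne, mul_zero]
          exact mul_nonneg (mul_nonneg hs.le (hm z).le) (hp z w)
        · obtain ⟨hwA, hpwz⟩ := hpAmem w z hne
          have hpzw : 0 < p z w := hpos_symm w z hpwz
          have hSb : (∑ k ∈ Finset.range n, K k w) ≤ s * m w := by
            by_cases hUw : U w
            · exact ih w hUw
            · have hGAw : GA w < s := hExit z w hz hpwz hUw
              have h1 : (∑ k ∈ Finset.range n, K k w) ≤ F w :=
                Summable.sum_le_tsum _ (fun k _ => hKnn k w) (hGfin w)
              have h2 : F w = m w * GA w := hFA w hwA
              nlinarith [hm w]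
          calc (∑ k ∈ Finset.range n, K k w) * pA w z
              ≤ (s * m w) * pA w z :=
                mul_le_mul_of_nonneg_right hSb (hpA0 w z)
            _ = (s * m w) * p w z := by rw [hpAA w z hwA]
            _ = s * (m w * p w z) := by ring
            _ = s * (m z * p z w) := by rw [hrev w z]
            _ = s * m z * p z w := by ring
      have hrhsS : Summable fun w => s * m z * p z w := (hpsum z).mul_left _
      have hlhsS : Summable fun w => (∑ k ∈ Finset.range n, K k w) * pA w z := by
        refine Summable.of_nonneg_of_le (fun w => ?_) hterm hrhsS
        exact mul_nonneg (Finset.sum_nonneg fun k _ => hKnn k w) (hpA0 w z)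
      calc ∑' w, (∑ k ∈ Finset.range n, K k w) * pA w z
          ≤ ∑' w, s * m z * p z w := Summable.tsum_le_tsum hterm hlhsS hrhsS
        _ = s * m z * ∑' w, p z w := tsum_mul_left
        _ = s * m z := by rw [hstoch z, mul_one]
  have hFleU : ∀ z, U z → F z ≤ s * m z := by
    intro z hz
    exact Real.tsum_le_of_sum_range_le (fun k => hKnn k z) (fun n => hMain n z hz)
  have hFgeU : ∀ z, U z → s * m z ≤ F z := by
    intro z hz
    have hzA : z ∈ A := hAs_mem z hz.1
    rw [hFA z hzA]
    nlinarith [hm z, hz.1]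
  -- full recursion for F and its summability, for z ≠ o
  have hFrec : ∀ z, z ≠ o →
      (F z = ∑' w, F w * pA w z ∧ Summable fun w => F w * pA w z) := by
    intro z hzo
    have hg0 : 0 ≤ fun q : ℕ × V => K q.1 q.2 * pA q.2 z :=
      fun q => mul_nonneg (hKnn q.1 q.2) (hpA0 q.2 z)
    have hmargk : Summable fun k : ℕ => ∑' w, K k w * pA w z := by
      have h1 : Summable fun k : ℕ => K (k + 1) z :=
        (hGfin z).comp_injective Nat.succ_injective
      exact h1.congr fun k => (hKs k z)
    have hg : Summable (fun q : ℕ × V => K q.1 q.2 * pA q.2 z) :=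
      (summable_prod_of_nonneg hg0).mpr ⟨fun k => hKmulS k z, hmargk⟩
    have hFw : Summable fun w => F w * pA w z := by
      have hswap : Summable (fun q : V × ℕ => K q.2 q.1 * pA q.1 z) := by
        have := hg.prod_symm
        exact this.congr fun q => rfl
      have h2 := ((summable_prod_of_nonneg
        (fun q : V × ℕ => hg0 (q.2, q.1))).mp hswap).2
      refine h2.congr fun w => ?_
      show (∑' k : ℕ, K k w * pA w z) = F w * pA w z
      rw [tsum_mul_right]
    refine ⟨?_, hFw⟩
    have hz0 : K 0 z = 0 := by
      rw [hK0, if_neg (fun h => hzo h.symm)]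
    calc F z = K 0 z + ∑' k, K (k + 1) z := Summable.tsum_eq_zero_add (hGfin z)
      _ = ∑' k, K (k + 1) z := by rw [hz0, zero_add]
      _ = ∑' k, ∑' w, K k w * pA w z := tsum_congr fun k => hKs k z
      _ = ∑' w, ∑' k, K k w * pA w z :=
          (Summable.tsum_comm (f := fun k w => K k w * pA w z) hg).symm
      _ = ∑' w, F w * pA w z := tsum_congr fun w => tsum_mul_right
  -- the strict step: a point of U with a small neighbour is impossible
  have hStrict : ∀ z w, U z → w ∈ A → 0 < p w z → GA w < s → False := by
    intro z w hz hwA hpwz hGAw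
    have hzo : z ≠ o := hUne z hz
    obtain ⟨hFz, hFS⟩ := hFrec z hzo
    have hpzw : 0 < p z w := hpos_symm w z hpwz
    have hterm : ∀ w', F w' * pA w' z ≤ s * m z * p z w' := by
      intro w'
      by_cases hne : pA w' z = 0
      · rw [hne, mul_zero]
        exact mul_nonneg (mul_nonneg hs.le (hm z).le) (hp z w')
      · obtain ⟨hw'A, hpw'z⟩ := hpAmem w' z hne
        have hFb : F w' ≤ s * m w' := by
          by_cases hUw' : U w'
          · exact hFleU w' hUw'
          · have hGAw' : GA w' < s := hExit z w' hz hpw'z hUw'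
            rw [hFA w' hw'A]
            nlinarith [hm w']
        calc F w' * pA w' z ≤ (s * m w') * pA w' z :=
              mul_le_mul_of_nonneg_right hFb (hpA0 w' z)
          _ = (s * m w') * p w' z := by rw [hpAA w' z hw'A]
          _ = s * (m w' * p w' z) := by ring
          _ = s * (m z * p z w') := by rw [hrev w' z]
          _ = s * m z * p z w' := by ring
    have hstrict_w : F w * pA w z < s * m z * p z w := by
      rw [hpAA w z hwA, hFA w hwA]
      have h1 : m w * GA w * p w z < s * (m w * p w z) := by
        nlinarith [mul_pos (mul_pos (hm w) hpwz) (sub_pos.mpr hGAw)]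
      calc m w * GA w * p w z < s * (m w * p w z) := h1
        _ = s * (m z * p z w) := by rw [hrev w z]
        _ = s * m z * p z w := by ring
    have hrhsS : Summable fun w' => s * m z * p z w' := (hpsum z).mul_left _
    have hlt : F z < s * m z := by
      calc F z = ∑' w', F w' * pA w' z := hFz
        _ < ∑' w', s * m z * p z w' := Summable.tsum_lt_tsum hterm hstrict_w hFS hrhsS
        _ = s * m z * ∑' w', p z w' := tsum_mul_left
        _ = s * m z := by rw [hstoch z, mul_one]
    have hge := hFgeU z hz
    linarith
  -- K vanishes on U
  have hKU : ∀ k z, U z → K k z = 0 := by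
    intro k
    induction k with
    | zero =>
      intro z hz
      rw [hK0, if_neg (fun h => (hUne z hz) h.symm)]
    | succ k ih =>
      intro z hz
      rw [hKs]
      have hall : ∀ w, K k w * pA w z = 0 := by
        intro w
        by_cases hne : pA w z = 0
        · rw [hne, mul_zero]
        · obtain ⟨hwA, hpwz⟩ := hpAmem w z hne
          by_cases hUw : U w
          · rw [ih w hUw, zero_mul]
          · exact absurd (hExit z w hz hpwz hUw)
              (fun hGAw => hStrict z w hz hwA hpwz hGAw)
      rw [tsum_congr hall, tsum_zero]
  -- conclusion
  refine ⟨⟨ho, hso⟩, ?_⟩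
  intro x hxA hxG
  by_contra hreach
  have hUx : U x := ⟨hxG, hreach⟩
  have hFx0 : F x = 0 := by
    rw [hFdef]
    simp only
    rw [tsum_congr (fun k => hKU k x hUx), tsum_zero]
  have := hFgeU x hUx
  nlinarith [hm x]
end

section
/- Let $u(s) = \sum_{x \in A_s, y \in G} \mu(x,y)\frac{G^A(x) - \max\{s, G^A(y)\}}{G^A(x) - G^A(y)}$ (with the convention that the fraction equals $1$ when $G^A(y) \ge s$). Then $\int_0^\infty u(s)\,ds = \sum_{x \in A, y \in G} \mu(x,y)\,\min\{G^A(x),\ (G^A(x)+G^A(y))/2\}$. -/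
open scoped Classical BigOperators
open MeasureTheory

lemma kerPow_nonneg {V : Type*} (q : V → V → ℝ) (hq : ∀ x y, 0 ≤ q x y) :
    ∀ n x y, 0 ≤ kerPow q n x y
  | 0, x, y => by simp only [kerPow]; split <;> norm_num
  | n + 1, x, y =>
    tsum_nonneg fun z => mul_nonneg (kerPow_nonneg q hq n x z) (hq z y)

/-- The single-pair integrand. -/
noncomputable def gfun (a b c : ℝ) : ℝ → ℝ :=
  fun s => if s ≤ a then c * (if s ≤ b then 1 else (a - max s b) / (a - b)) else 0

lemma gfun_ratio {a b s : ℝ} (hsa : s ≤ a) (hsb : ¬ s ≤ b) :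
    0 ≤ (a - max s b) / (a - b) ∧ (a - max s b) / (a - b) ≤ 1 := by
  push_neg at hsb
  have hmax : max s b = s := max_eq_left hsb.le
  rw [hmax]
  have hba : b < a := lt_of_lt_of_le hsb hsa
  constructor
  · exact div_nonneg (by linarith) (by linarith)
  · rw [div_le_one (by linarith)]; linarith

lemma gfun_nonneg {a b c : ℝ} (hc : 0 ≤ c) (s : ℝ) : 0 ≤ gfun a b c s := by
  unfold gfun
  split
  · rename_i hsa
    split
    · simpa using hc
    · rename_i hsb
      exact mul_nonneg hc (gfun_ratio hsa hsb).1
  · exact le_rfl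

lemma gfun_bound {a b c : ℝ} (hc : 0 ≤ c) (s : ℝ) : ‖gfun a b c s‖ ≤ c := by
  rw [Real.norm_eq_abs, abs_of_nonneg (gfun_nonneg hc s)]
  unfold gfun
  split
  · rename_i hsa
    split
    · simp
    · rename_i hsb
      calc c * ((a - max s b) / (a - b)) ≤ c * 1 :=
            mul_le_mul_of_nonneg_left (gfun_ratio hsa hsb).2 hc
        _ = c := mul_one c
  · exact hc

lemma gfun_measurable (a b c : ℝ) : Measurable (gfun a b c) := by
  unfold gfun
  apply Measurable.ite (measurableSet_Iic (a := a))
  · apply Measurable.const_mul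
    apply Measurable.ite (measurableSet_Iic (a := b)) measurable_const
    exact (measurable_const.sub ((measurable_id.max measurable_const))).div_const _
  · exact measurable_const

lemma gfun_integrableOn_Icc {a b c : ℝ} (hc : 0 ≤ c) (x y : ℝ) :
    IntegrableOn (gfun a b c) (Set.Icc x y) := by
  apply Measure.integrableOn_of_bounded (M := c) measure_Icc_lt_top.ne
    (gfun_measurable a b c).aestronglyMeasurable
  exact ae_of_all _ fun s => gfun_bound hc s

lemma gfun_integrableOn {a b c : ℝ} (ha : 0 ≤ a) (hc : 0 ≤ c) :
    IntegrableOn (gfun a b c) (Set.Ioi (0 : ℝ)) := by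
  rw [← Set.Ioc_union_Ioi_eq_Ioi ha]
  apply IntegrableOn.union
  · exact (gfun_integrableOn_Icc hc 0 a).mono_set Set.Ioc_subset_Icc_self
  · apply IntegrableOn.congr_fun (f := fun _ => (0 : ℝ))
    · exact integrableOn_zero
    · intro s hs
      simp [gfun, not_le.2 (Set.mem_Ioi.1 hs)]
    · exact measurableSet_Ioi

lemma gfun_integral {a b c : ℝ} (ha : 0 ≤ a) (hb : 0 ≤ b) (hc : 0 ≤ c) :
    ∫ s in Set.Ioi (0 : ℝ), gfun a b c s = c * min a ((a + b) / 2) := by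
  have hzero : ∀ s ∈ Set.Ioi a, gfun a b c s = 0 := fun s hs => if_neg (not_le.2 hs)
  rw [← Set.Ioc_union_Ioi_eq_Ioi ha,
    setIntegral_union (Set.Ioc_disjoint_Ioi le_rfl) measurableSet_Ioi
      ((gfun_integrableOn_Icc hc 0 a).mono_set Set.Ioc_subset_Icc_self)
      (((gfun_integrableOn ha hc)).mono_set (Set.Ioi_subset_Ioi ha)),
    setIntegral_congr_fun measurableSet_Ioi hzero, integral_zero, add_zero,
    ← intervalIntegral.integral_of_le ha]
  by_cases hab : a ≤ b
  · have h1 : Set.EqOn (gfun a b c) (fun _ => c) (Set.uIcc 0 a) := by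
      intro s hs
      rw [Set.uIcc_of_le ha] at hs
      have hsa : s ≤ a := hs.2
      have hsb : s ≤ b := le_trans hsa hab
      simp [gfun, hsa, hsb]
    rw [intervalIntegral.integral_congr h1, intervalIntegral.integral_const,
      min_eq_left (by linarith)]
    simp [smul_eq_mul]; ring
  · push_neg at hab
    have hIb : IntervalIntegrable (gfun a b c) volume 0 b := by
      apply IntegrableOn.intervalIntegrable
      rw [Set.uIcc_of_le hb]
      exact gfun_integrableOn_Icc hc 0 b
    have hIa : IntervalIntegrable (gfun a b c) volume b a := by
      apply IntegrableOn.intervalIntegrable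
      rw [Set.uIcc_of_le hab.le]
      exact gfun_integrableOn_Icc hc b a
    rw [← intervalIntegral.integral_add_adjacent_intervals hIb hIa]
    have h1 : Set.EqOn (gfun a b c) (fun _ => c) (Set.uIcc 0 b) := by
      intro s hs
      rw [Set.uIcc_of_le hb] at hs
      have hsb : s ≤ b := hs.2
      have hsa : s ≤ a := le_trans hsb hab.le
      simp [gfun, hsa, hsb]
    have h2 : Set.EqOn (gfun a b c) (fun s => c / (a - b) * (a - s)) (Set.uIcc b a) := by
      intro s hs
      rw [Set.uIcc_of_le hab.le] at hs
      have hsa : s ≤ a := hs.2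
      have hba : a - b ≠ 0 := by linarith
      by_cases hsb : s ≤ b
      · have hseq : s = b := le_antisymm hsb hs.1
        subst hseq
        simp only [gfun, if_pos hsa, if_pos hsb, mul_one]
        rw [div_mul_cancel₀ c hba]
      · have hmax : max s b = s := max_eq_left (not_le.1 hsb).le
        simp only [gfun, if_pos hsa, if_neg hsb, hmax]
        field_simp
    rw [intervalIntegral.integral_congr h1, intervalIntegral.integral_congr h2,
      intervalIntegral.integral_const]
    have h3 : ∫ s in b..a, c / (a - b) * (a - s) = c / (a - b) * ∫ s in b..a, (a - s) := by
      rw [← intervalIntegral.integral_const_mul]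
    have h4 : ∫ s in b..a, (a - s) = (a - b) ^ 2 / 2 := by
      rw [intervalIntegral.integral_sub intervalIntegrable_const
        intervalIntegral.intervalIntegrable_id, intervalIntegral.integral_const,
        integral_id]
      simp [smul_eq_mul]; ring
    rw [h3, h4, min_eq_right (by linarith)]
    have hba : a - b ≠ 0 := by linarith
    field_simp
    ring

/-- Integral of the linearized superlevel measure
`u(s) = ∑_{x ∈ A_s, y} μ(x,y) (G^A(x) - max(s, G^A(y)))/(G^A(x) - G^A(y))`
(the fraction taken to be `1` when `G^A(y) ≥ s`):
`∫_0^∞ u(s) ds = ∑_{x ∈ A, y} μ(x,y) min{G^A(x), (G^A(x)+G^A(y))/2}`. -/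
theorem statement6 {V : Type*} [Countable V]
    (p : V → V → ℝ) (m : V → ℝ)
    (hp : ∀ x y, 0 ≤ p x y) (hstoch : ∀ x, ∑' y, p x y = 1)
    (hm : ∀ x, 0 < m x) (hrev : ∀ x y, m x * p x y = m y * p y x)
    (A : Set V) (o : V) (ho : o ∈ A)
    (pA : V → V → ℝ) (hpA : ∀ x y, pA x y = if x ∈ A then p x y else 0)
    (GA : V → ℝ)
    (hGA : ∀ x, GA x = if x ∈ A then (∑' k : ℕ, kerPow pA k o x) / m x else 0)
    (hGfin : ∀ x, Summable fun k : ℕ => kerPow pA k o x)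
    (u : ℝ → ℝ)
    (hu : ∀ s, u s = ∑' xy : V × V,
      if xy.1 ∈ A ∧ s ≤ GA xy.1 then
        m xy.1 * p xy.1 xy.2 *
          (if s ≤ GA xy.2 then 1
           else (GA xy.1 - max s (GA xy.2)) / (GA xy.1 - GA xy.2))
      else 0)
    (hu_sum : ∀ s, Summable fun xy : V × V =>
      if xy.1 ∈ A ∧ s ≤ GA xy.1 then
        m xy.1 * p xy.1 xy.2 *
          (if s ≤ GA xy.2 then 1
           else (GA xy.1 - max s (GA xy.2)) / (GA xy.1 - GA xy.2))
      else 0)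
    (hu_int : IntegrableOn u (Set.Ioi (0 : ℝ)))
    (hmin_sum : Summable fun xy : V × V =>
      if xy.1 ∈ A then
        m xy.1 * p xy.1 xy.2 * min (GA xy.1) ((GA xy.1 + GA xy.2) / 2)
      else 0) :
    (∫ s in Set.Ioi (0 : ℝ), u s) =
      ∑' xy : V × V,
        if xy.1 ∈ A then
          m xy.1 * p xy.1 xy.2 * min (GA xy.1) ((GA xy.1 + GA xy.2) / 2)
        else 0 := by
  have hpA0 : ∀ x y, 0 ≤ pA x y := by
    intro x y; rw [hpA]; split
    · exact hp x y
    · exact le_rfl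
  have hGA0 : ∀ x, 0 ≤ GA x := by
    intro x
    rw [hGA]
    split
    · exact div_nonneg (tsum_nonneg fun k => kerPow_nonneg pA hpA0 k o x) (hm x).le
    · exact le_rfl
  set F : V × V → ℝ → ℝ := fun xy s =>
    if xy.1 ∈ A ∧ s ≤ GA xy.1 then
      m xy.1 * p xy.1 xy.2 *
        (if s ≤ GA xy.2 then 1
         else (GA xy.1 - max s (GA xy.2)) / (GA xy.1 - GA xy.2))
    else 0 with hF
  have hc0 : ∀ xy : V × V, 0 ≤ m xy.1 * p xy.1 xy.2 := fun xy =>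
    mul_nonneg (hm xy.1).le (hp xy.1 xy.2)
  have hFg : ∀ xy : V × V, xy.1 ∈ A →
      F xy = gfun (GA xy.1) (GA xy.2) (m xy.1 * p xy.1 xy.2) := by
    intro xy hx
    funext s
    simp [hF, gfun, hx]
  have hFz : ∀ xy : V × V, xy.1 ∉ A → F xy = fun _ => 0 := by
    intro xy hx
    funext s
    simp [hF, hx]
  have hFint : ∀ xy : V × V, IntegrableOn (F xy) (Set.Ioi (0 : ℝ)) := by
    intro xy
    by_cases hx : xy.1 ∈ A
    · rw [hFg xy hx]; exact gfun_integrableOn (hGA0 _) (hc0 xy)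
    · rw [hFz xy hx]; exact integrableOn_zero
  have hFnn : ∀ xy : V × V, ∀ s, 0 ≤ F xy s := by
    intro xy s
    by_cases hx : xy.1 ∈ A
    · rw [hFg xy hx]; exact gfun_nonneg (hc0 xy) s
    · rw [hFz xy hx]
  have hFval : ∀ xy : V × V, ∫ s in Set.Ioi (0 : ℝ), F xy s =
      (if xy.1 ∈ A then
        m xy.1 * p xy.1 xy.2 * min (GA xy.1) ((GA xy.1 + GA xy.2) / 2) else 0) := by
    intro xy
    by_cases hx : xy.1 ∈ A
    · rw [hFg xy hx, if_pos hx]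
      exact gfun_integral (hGA0 _) (hGA0 _) (hc0 xy)
    · rw [hFz xy hx, if_neg hx]
      simp
  have hFmeas : ∀ xy : V × V,
      AEStronglyMeasurable (F xy) (volume.restrict (Set.Ioi (0 : ℝ))) := by
    intro xy
    by_cases hx : xy.1 ∈ A
    · rw [hFg xy hx]; exact (gfun_measurable _ _ _).aestronglyMeasurable
    · rw [hFz xy hx]; exact aestronglyMeasurable_const
  have htnn : ∀ xy : V × V, 0 ≤ (if xy.1 ∈ A then
      m xy.1 * p xy.1 xy.2 * min (GA xy.1) ((GA xy.1 + GA xy.2) / 2) else 0) := by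
    intro xy
    split
    · exact mul_nonneg (hc0 xy) (le_min (hGA0 _) (by
        have := hGA0 xy.1; have := hGA0 xy.2; linarith))
    · exact le_rfl
  have hlin : ∀ xy : V × V,
      (∫⁻ s in Set.Ioi (0 : ℝ), ‖F xy s‖ₑ) =
        ENNReal.ofReal (if xy.1 ∈ A then
          m xy.1 * p xy.1 xy.2 * min (GA xy.1) ((GA xy.1 + GA xy.2) / 2) else 0) := by
    intro xy
    rw [← hFval xy, ofReal_integral_eq_lintegral_ofReal (hFint xy)
      (ae_of_all _ fun s => hFnn xy s)]
    apply lintegral_congr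
    intro s
    rw [Real.enorm_eq_ofReal (hFnn xy s)]
  have hswap : (∫ s in Set.Ioi (0 : ℝ), ∑' xy : V × V, F xy s) =
      ∑' xy : V × V, ∫ s in Set.Ioi (0 : ℝ), F xy s := by
    apply integral_tsum hFmeas
    rw [tsum_congr hlin, ← ENNReal.ofReal_tsum_of_nonneg htnn hmin_sum]
    exact ENNReal.ofReal_ne_top
  calc (∫ s in Set.Ioi (0 : ℝ), u s)
      = ∫ s in Set.Ioi (0 : ℝ), ∑' xy : V × V, F xy s := by
        apply setIntegral_congr_fun measurableSet_Ioi
        intro s _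
        exact hu s
    _ = ∑' xy : V × V, ∫ s in Set.Ioi (0 : ℝ), F xy s := hswap
    _ = _ := tsum_congr hFval
end

section
/- Suppose a nonincreasing function $u : [0,\infty) \to [0,\infty)$ satisfies $u(0) \le m(A)$ and $u'(s) \le -(C\,\mathcal{F}(u(s)))^2$ whenever $u(s) > 0$, where $\mathcal{F}$ is positive nondecreasing with $\int_1^\infty \mathcal{F}(s)^{-2}\,ds < \infty$. Then there exists $t_0$, depending only on $C$ and $\mathcal{F}$ (not on $A$ or $u(0)$), such that $u(t) < 1$ for all $t \ge t_0$. -/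
open MeasureTheory

/-- Mean-value type decay estimate: if the left derivative of `u` is at most
`-(C*F(u s))^2` while `u` is positive, and `a ≤ u s2`, then on `[s1, s2]`
the function decreases with speed at least `(C*F a)^2`. -/
lemma decay_aux (C : ℝ) (hC : 0 < C) (F : ℝ → ℝ) (hFpos : ∀ x, 0 < x → 0 < F x)
    (hFmono : MonotoneOn F (Set.Ioi (0 : ℝ)))
    (u D : ℝ → ℝ)
    (hanti : AntitoneOn u (Set.Ici (0 : ℝ)))
    (hcont : ContinuousOn u (Set.Ici (0 : ℝ)))
    (hderiv : ∀ s, 0 < s → 0 < u s → HasDerivWithinAt u (D s) (Set.Iic s) s)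
    (hDle : ∀ s, 0 < s → 0 < u s → D s ≤ -(C * F (u s)) ^ 2)
    {a s1 s2 : ℝ} (ha : 0 < a) (hs1 : 0 ≤ s1) (hs12 : s1 ≤ s2) (hau : a ≤ u s2) :
    u s2 + (C * F a) ^ 2 * (s2 - s1) ≤ u s1 := by
  set σ := s1 + s2 with hσ
  set c := (C * F a) ^ 2 with hc
  have hs2 : 0 ≤ s2 := le_trans hs1 hs12
  -- facts about points s = σ - x for x ∈ Ico s1 s2
  have hsfact : ∀ x ∈ Set.Ico s1 s2, 0 < σ - x ∧ s1 < σ - x ∧ σ - x ≤ s2 := by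
    intro x hx
    constructor
    · linarith [hx.1, hx.2]
    constructor
    · linarith [hx.2]
    · linarith [hx.1]
  have hfcont : ContinuousOn (fun x => -u (σ - x)) (Set.Icc s1 s2) := by
    apply ContinuousOn.neg
    apply hcont.comp (Continuous.continuousOn (by continuity))
    intro y hy
    simp only [Set.mem_Icc] at hy
    simp only [Set.mem_Ici]
    linarith [hy.1, hy.2]
  have hfderiv : ∀ x ∈ Set.Ico s1 s2,
      HasDerivWithinAt (fun x => -u (σ - x)) ((fun x => D (σ - x)) x) (Set.Ici x) x := by
    intro x hx
    obtain ⟨hspos, hs1lt, hsle⟩ := hsfact x hx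
    set s := σ - x with hsdef
    have hus : a ≤ u s := le_trans hau (hanti (by simp only [Set.mem_Ici]; linarith)
      (by simp only [Set.mem_Ici]; exact hs2) hsle)
    have hupos : 0 < u s := lt_of_lt_of_le ha hus
    have houter := hderiv s hspos hupos
    have hinner : HasDerivWithinAt (fun y => σ - y) (-1) (Set.Ici x) x := by
      simpa using (hasDerivWithinAt_id x (Set.Ici x)).const_sub σ
    have hmaps : Set.MapsTo (fun y => σ - y) (Set.Ici x) (Set.Iic s) := by
      intro y hy
      simp only [Set.mem_Ici] at hy
      simp only [Set.mem_Iic, hsdef]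
      linarith
    have hcomp := HasDerivWithinAt.comp x houter hinner hmaps
    have h := hcomp.neg
    have hval : -(D s * -1) = D s := by ring
    rw [hval] at h
    exact h
  have hinit : (fun x => -u (σ - x)) s1 ≤ (fun x => -(u s2) - c * (x - s1)) s1 := by
    have h1 : σ - s1 = s2 := by rw [hσ]; ring
    simp [h1]
  have hBcont : ContinuousOn (fun x => -(u s2) - c * (x - s1)) (Set.Icc s1 s2) :=
    Continuous.continuousOn (by continuity)
  have hBderiv : ∀ x ∈ Set.Ico s1 s2,
      HasDerivWithinAt (fun x => -(u s2) - c * (x - s1)) ((fun _ => -c) x) (Set.Ici x) x := by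
    intro x _
    have : HasDerivWithinAt (fun y => -(u s2) - c * (y - s1)) (-(c * 1)) (Set.Ici x) x :=
      HasDerivWithinAt.const_sub _
        (HasDerivWithinAt.const_mul c ((hasDerivWithinAt_id x (Set.Ici x)).sub_const s1))
    simpa using this
  have hbound : ∀ x ∈ Set.Ico s1 s2, (fun x => D (σ - x)) x ≤ (fun _ => -c) x := by
    intro x hx
    obtain ⟨hspos, hs1lt, hsle⟩ := hsfact x hx
    set s := σ - x with hsdef
    have hus : a ≤ u s := le_trans hau (hanti (by simp only [Set.mem_Ici]; linarith)
      (by simp only [Set.mem_Ici]; exact hs2) hsle)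
    have hupos : 0 < u s := lt_of_lt_of_le ha hus
    have h1 := hDle s hspos hupos
    have hFa : 0 < F a := hFpos a ha
    have hFus : F a ≤ F (u s) := hFmono (Set.mem_Ioi.2 ha) (Set.mem_Ioi.2 hupos) hus
    have h2 : (C * F a) ^ 2 ≤ (C * F (u s)) ^ 2 :=
      pow_le_pow_left₀ (by positivity) (by nlinarith) 2
    show D s ≤ -c
    rw [hc]
    linarith
  have key := image_le_of_deriv_right_le_deriv_boundary hfcont hfderiv hinit hBcont hBderiv hbound
  have hfin := key ⟨hs12, le_refl s2⟩
  have h2 : σ - s2 = s1 := by rw [hσ]; ring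
  simp only [h2] at hfin
  linarith

noncomputable def thomBucket (C : ℝ) (F : ℝ → ℝ) : ℕ → ℝ
  | 0 => 1 / (C ^ 2 * F 1 ^ 2)
  | (k + 1) => (2 / C ^ 2) * ∫ s in Set.Ioc ((2:ℝ) ^ k) ((2:ℝ) ^ (k + 1)), 1 / F s ^ 2

noncomputable def thomQ (C : ℝ) (F : ℝ → ℝ) : ℕ → ℝ
  | 0 => 0
  | (k + 1) => thomQ C F k + thomBucket C F k

lemma thomBucket_nonneg (C : ℝ) (F : ℝ → ℝ) (k : ℕ) : 0 ≤ thomBucket C F k := by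
  cases k with
  | zero => simp only [thomBucket]; positivity
  | succ k =>
      simp only [thomBucket]
      apply mul_nonneg (by positivity)
      apply MeasureTheory.setIntegral_nonneg measurableSet_Ioc
      intro x _
      positivity

lemma thomQ_nonneg (C : ℝ) (F : ℝ → ℝ) (k : ℕ) : 0 ≤ thomQ C F k := by
  induction k with
  | zero => simp [thomQ]
  | succ k ih =>
      simp only [thomQ]
      exact add_nonneg ih (thomBucket_nonneg C F k)

lemma thomBucket_lower (C : ℝ) (hC : 0 < C) (F : ℝ → ℝ) (hFpos : ∀ x, 0 < x → 0 < F x)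
    (hFmono : MonotoneOn F (Set.Ioi (0 : ℝ)))
    (hFint : IntegrableOn (fun s => 1 / F s ^ 2) (Set.Ioi (1 : ℝ))) (k : ℕ) :
    (2:ℝ) ^ k / (C ^ 2 * F ((2:ℝ) ^ k) ^ 2) ≤ thomBucket C F k := by
  cases k with
  | zero => simp [thomBucket]
  | succ k =>
      simp only [thomBucket]
      set a : ℝ := (2:ℝ) ^ k with hadef
      set b : ℝ := (2:ℝ) ^ (k + 1) with hbdef
      have h1a : (1:ℝ) ≤ a := one_le_pow₀ one_le_two
      have hab : a < b := by
        rw [hadef, hbdef]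
        exact pow_lt_pow_right₀ one_lt_two (Nat.lt_succ_self k)
      have hbpos : 0 < b := lt_of_le_of_lt (le_trans zero_le_one h1a) hab
      have hFb : 0 < F b := hFpos b hbpos
      have hsub : Set.Ioc a b ⊆ Set.Ioi (1:ℝ) := by
        intro x hx
        exact lt_of_le_of_lt h1a hx.1
      have hint : IntegrableOn (fun s => 1 / F s ^ 2) (Set.Ioc a b) := hFint.mono_set hsub
      have hconst : ∀ x ∈ Set.Ioc a b, 1 / F b ^ 2 ≤ 1 / F x ^ 2 := by
        intro x hx
        have hxpos : 0 < x := lt_of_le_of_lt (le_trans zero_le_one h1a) hx.1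
        have hFx : 0 < F x := hFpos x hxpos
        have hle : F x ≤ F b := hFmono (Set.mem_Ioi.2 hxpos) (Set.mem_Ioi.2 hbpos) hx.2
        apply one_div_le_one_div_of_le (by positivity)
        exact pow_le_pow_left₀ (le_of_lt hFx) hle 2
      have hmeas : (volume (Set.Ioc a b)) ≠ ⊤ := by
        rw [Real.volume_Ioc]
        exact ENNReal.ofReal_ne_top
      have hlow := MeasureTheory.setIntegral_ge_of_const_le measurableSet_Ioc hmeas hconst hint
      rw [measureReal_def, Real.volume_Ioc, ENNReal.toReal_ofReal (by linarith)] at hlow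
      have hba : b - a = (2:ℝ) ^ k := by
        rw [hadef, hbdef, pow_succ]
        ring
      rw [hba] at hlow
      have hCne : C ≠ 0 := ne_of_gt hC
      have hFbne : F b ≠ 0 := ne_of_gt hFb
      have heq : b / (C ^ 2 * F b ^ 2) = (2 / C ^ 2) * (1 / F b ^ 2 * (2:ℝ) ^ k) := by
        rw [hbdef, pow_succ]
        field_simp
      rw [heq]
      apply mul_le_mul_of_nonneg_left _ (by positivity)
      rw [smul_eq_mul] at hlow
      linarith

lemma thomQ_le (C : ℝ) (hC : 0 < C) (F : ℝ → ℝ) (hFpos : ∀ x, 0 < x → 0 < F x)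
    (hFint : IntegrableOn (fun s => 1 / F s ^ 2) (Set.Ioi (1 : ℝ))) (k : ℕ) :
    thomQ C F (k + 1) ≤ 1 / (C ^ 2 * F 1 ^ 2)
      + (2 / C ^ 2) * ∫ s in Set.Ioc (1:ℝ) ((2:ℝ) ^ k), 1 / F s ^ 2 := by
  induction k with
  | zero =>
      simp [thomQ, thomBucket, Set.Ioc_self]
  | succ k ih =>
      have h1a : (1:ℝ) ≤ (2:ℝ) ^ k := one_le_pow₀ one_le_two
      have hab : ((2:ℝ) ^ k) ≤ (2:ℝ) ^ (k + 1) :=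
        le_of_lt (pow_lt_pow_right₀ one_lt_two (Nat.lt_succ_self k))
      have hsub1 : Set.Ioc (1:ℝ) ((2:ℝ) ^ k) ⊆ Set.Ioi (1:ℝ) := fun x hx => hx.1
      have hsub2 : Set.Ioc ((2:ℝ) ^ k) ((2:ℝ) ^ (k+1)) ⊆ Set.Ioi (1:ℝ) := fun x hx =>
        lt_of_le_of_lt h1a hx.1
      have hunion : Set.Ioc (1:ℝ) ((2:ℝ) ^ k) ∪ Set.Ioc ((2:ℝ) ^ k) ((2:ℝ) ^ (k+1))
          = Set.Ioc (1:ℝ) ((2:ℝ) ^ (k+1)) := Set.Ioc_union_Ioc_eq_Ioc h1a hab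
      have hintu : (∫ s in Set.Ioc (1:ℝ) ((2:ℝ) ^ (k+1)), 1 / F s ^ 2)
          = (∫ s in Set.Ioc (1:ℝ) ((2:ℝ) ^ k), 1 / F s ^ 2)
            + ∫ s in Set.Ioc ((2:ℝ) ^ k) ((2:ℝ) ^ (k+1)), 1 / F s ^ 2 := by
        rw [← hunion]
        exact MeasureTheory.setIntegral_union (Set.Ioc_disjoint_Ioc_of_le le_rfl) measurableSet_Ioc
          (hFint.mono_set hsub1) (hFint.mono_set hsub2)
      have hQ : thomQ C F (k + 2) = thomQ C F (k + 1) + thomBucket C F (k + 1) := rfl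
      rw [hQ, hintu]
      have hb : thomBucket C F (k + 1)
          = (2 / C ^ 2) * ∫ s in Set.Ioc ((2:ℝ) ^ k) ((2:ℝ) ^ (k+1)), 1 / F s ^ 2 := rfl
      rw [hb]
      linarith [ih]

lemma thom_key (C : ℝ) (hC : 0 < C) (F : ℝ → ℝ) (hFpos : ∀ x, 0 < x → 0 < F x)
    (hFmono : MonotoneOn F (Set.Ioi (0 : ℝ)))
    (hFint : IntegrableOn (fun s => 1 / F s ^ 2) (Set.Ioi (1 : ℝ))) :
    ∀ k : ℕ, ∀ u D : ℝ → ℝ,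
      (∀ s, 0 ≤ u s) →
      AntitoneOn u (Set.Ici (0 : ℝ)) →
      ContinuousOn u (Set.Ici (0 : ℝ)) →
      (∀ s, 0 < s → 0 < u s → HasDerivWithinAt u (D s) (Set.Iic s) s) →
      (∀ s, 0 < s → 0 < u s → D s ≤ -(C * F (u s)) ^ 2) →
      ∀ t, 0 ≤ t → u 0 ≤ (2:ℝ) ^ k → 1 ≤ u t → t ≤ thomQ C F k := by
  intro k
  induction k with
  | zero =>
      intro u D hnn hanti hcont hderiv hDle t ht h0 h1
      have hd := decay_aux C hC F hFpos hFmono u D hanti hcont hderiv hDle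
        (a := 1) (s1 := 0) (s2 := t) one_pos le_rfl ht h1
      have hF1 : 0 < F 1 := hFpos 1 one_pos
      have hc : 0 < (C * F 1) ^ 2 := by positivity
      have : t ≤ 0 := by nlinarith [hd, h0, h1]
      simpa [thomQ] using this
  | succ k ih =>
      intro u D hnn hanti hcont hderiv hDle t ht h0 h1
      have h2kpos : (0:ℝ) < (2:ℝ) ^ k := by positivity
      have hF2k : 0 < F ((2:ℝ) ^ k) := hFpos _ h2kpos
      have hc : 0 < (C * F ((2:ℝ) ^ k)) ^ 2 := by positivity
      have hcc : (C * F ((2:ℝ) ^ k)) ^ 2 = C ^ 2 * F ((2:ℝ) ^ k) ^ 2 := mul_pow C _ 2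
      have hQk : 0 ≤ thomQ C F k := thomQ_nonneg C F k
      have hbk : (2:ℝ) ^ k / (C ^ 2 * F ((2:ℝ) ^ k) ^ 2) ≤ thomBucket C F k :=
        thomBucket_lower C hC F hFpos hFmono hFint k
      have hQsucc : thomQ C F (k + 1) = thomQ C F k + thomBucket C F k := rfl
      by_cases h0' : u 0 ≤ (2:ℝ) ^ k
      · have := ih u D hnn hanti hcont hderiv hDle t ht h0' h1
        rw [hQsucc]
        linarith [thomBucket_nonneg C F k]
      · push_neg at h0'
        by_cases h1' : (2:ℝ) ^ k ≤ u t
        · -- u stays above 2^k up to time t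
          have hd := decay_aux C hC F hFpos hFmono u D hanti hcont hderiv hDle
            (a := (2:ℝ) ^ k) (s1 := 0) (s2 := t) h2kpos le_rfl ht h1'
          have hct : (C * F ((2:ℝ) ^ k)) ^ 2 * t ≤ (2:ℝ) ^ k := by
            have h2 : u 0 ≤ (2:ℝ) ^ (k + 1) := h0
            have h3 : (2:ℝ) ^ (k + 1) = 2 * (2:ℝ) ^ k := by rw [pow_succ]; ring
            nlinarith [hd, h1', h2]
          have htle : t ≤ (2:ℝ) ^ k / (C ^ 2 * F ((2:ℝ) ^ k) ^ 2) := by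
            rw [← hcc]
            rw [le_div_iff₀ hc]
            linarith [hct]
          rw [hQsucc]
          linarith
        · push_neg at h1'
          -- find the crossing time s'
          have hIcc : ContinuousOn u (Set.Icc 0 t) :=
            hcont.mono (fun x hx => hx.1)
          have hmem : (2:ℝ) ^ k ∈ Set.Icc (u t) (u 0) := ⟨le_of_lt h1', le_of_lt h0'⟩
          obtain ⟨s', hs'mem, hs'⟩ := intermediate_value_Icc' ht hIcc hmem
          have hs'0 : 0 ≤ s' := hs'mem.1
          have hs't : s' ≤ t := hs'mem.2
          -- bound on s'
          have hd := decay_aux C hC F hFpos hFmono u D hanti hcont hderiv hDle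
            (a := (2:ℝ) ^ k) (s1 := 0) (s2 := s') h2kpos le_rfl hs'0 (le_of_eq hs'.symm)
          have hcs : (C * F ((2:ℝ) ^ k)) ^ 2 * s' ≤ (2:ℝ) ^ k := by
            have h3 : (2:ℝ) ^ (k + 1) = 2 * (2:ℝ) ^ k := by rw [pow_succ]; ring
            nlinarith [hd, h0, hs']
          have hs'le : s' ≤ (2:ℝ) ^ k / (C ^ 2 * F ((2:ℝ) ^ k) ^ 2) := by
            rw [← hcc, le_div_iff₀ hc]
            linarith
          -- shifted function
          set v : ℝ → ℝ := fun s => u (s' + s) with hv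
          set E : ℝ → ℝ := fun s => D (s' + s) with hE
          have hvnn : ∀ s, 0 ≤ v s := fun s => hnn _
          have hvanti : AntitoneOn v (Set.Ici (0:ℝ)) := by
            intro x hx y hy hxy
            exact hanti (by simp only [Set.mem_Ici] at hx ⊢; linarith)
              (by simp only [Set.mem_Ici] at hy ⊢; linarith) (by linarith)
          have hvcont : ContinuousOn v (Set.Ici (0:ℝ)) := by
            apply hcont.comp ((continuous_const.add continuous_id).continuousOn)
            intro x hx
            simp only [Set.mem_Ici, id_eq, Pi.add_apply] at hx ⊢
            linarith
          have hvderiv : ∀ s, 0 < s → 0 < v s → HasDerivWithinAt v (E s) (Set.Iic s) s := by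
            intro s hs hvs
            have hpos : 0 < s' + s := by linarith
            have houter := hderiv (s' + s) hpos hvs
            have hinner : HasDerivWithinAt (fun x => s' + x) 1 (Set.Iic s) s := by
              simpa using (hasDerivWithinAt_id s (Set.Iic s)).const_add s'
            have hmaps : Set.MapsTo (fun x => s' + x) (Set.Iic s) (Set.Iic (s' + s)) := by
              intro y hy
              simp only [Set.mem_Iic] at hy ⊢
              linarith
            have hcomp := HasDerivWithinAt.comp s houter hinner hmaps
            rw [mul_one] at hcomp
            exact hcomp
          have hvDle : ∀ s, 0 < s → 0 < v s → E s ≤ -(C * F (v s)) ^ 2 := by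
            intro s hs hvs
            exact hDle (s' + s) (by linarith) hvs
          have hv0 : v 0 ≤ (2:ℝ) ^ k := by
            simp only [hv, add_zero]
            exact le_of_eq hs'
          have hvt : 1 ≤ v (t - s') := by
            simp only [hv]
            have : s' + (t - s') = t := by ring
            rw [this]
            exact h1
          have := ih v E hvnn hvanti hvcont hvderiv hvDle (t - s') (by linarith) hv0 hvt
          rw [hQsucc]
          linarith

/-- Key estimate for the ODE proof of Thomassen's transience criterion:
if `F` is positive, nondecreasing with `∫_1^∞ F(s)⁻² ds < ∞` and `C > 0`,
there is `t₀` (depending only on `C` and `F`) such that every nonincreasing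
`u : [0,∞) → [0,∞)` whose left derivative satisfies
`u'(s) ≤ -(C F(u(s)))²` whenever `u(s) > 0` obeys `u(t) < 1` for all `t ≥ t₀`. -/
theorem statement12 (C : ℝ) (hC : 0 < C)
    (F : ℝ → ℝ) (hFpos : ∀ x, 0 < x → 0 < F x)
    (hFmono : MonotoneOn F (Set.Ioi (0 : ℝ)))
    (hFint : IntegrableOn (fun s => 1 / F s ^ 2) (Set.Ioi (1 : ℝ))) :
    ∃ t0 : ℝ, ∀ u D : ℝ → ℝ,
      (∀ s, 0 ≤ u s) →
      AntitoneOn u (Set.Ici (0 : ℝ)) →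
      ContinuousOn u (Set.Ici (0 : ℝ)) →
      (∀ s, 0 < s → 0 < u s → HasDerivWithinAt u (D s) (Set.Iic s) s) →
      (∀ s, 0 < s → 0 < u s → D s ≤ -(C * F (u s)) ^ 2) →
      ∀ t, t0 ≤ t → u t < 1 := by
  set I : ℝ := ∫ s in Set.Ioi (1:ℝ), 1 / F s ^ 2 with hI
  refine ⟨1 / (C ^ 2 * F 1 ^ 2) + (2 / C ^ 2) * I + 1, ?_⟩
  intro u D hnn hanti hcont hderiv hDle t ht
  by_contra hcon
  push_neg at hcon
  have hInn : 0 ≤ I := MeasureTheory.setIntegral_nonneg measurableSet_Ioi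
    (fun x _ => by positivity)
  have hB0 : (0:ℝ) ≤ 1 / (C ^ 2 * F 1 ^ 2) := by positivity
  have h2I : (0:ℝ) ≤ (2 / C ^ 2) * I := mul_nonneg (by positivity) hInn
  have ht0 : 0 ≤ t := by linarith
  obtain ⟨k, hk⟩ := pow_unbounded_of_one_lt (u 0) (one_lt_two : (1:ℝ) < 2)
  have hkey := thom_key C hC F hFpos hFmono hFint k u D hnn hanti hcont hderiv hDle
    t ht0 (le_of_lt hk) hcon
  have hQtop : thomQ C F k ≤ 1 / (C ^ 2 * F 1 ^ 2) + (2 / C ^ 2) * I := by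
    cases k with
    | zero =>
        simp only [thomQ]
        linarith
    | succ k =>
        have h1 := thomQ_le C hC F hFpos hFint k
        have h2 : (∫ s in Set.Ioc (1:ℝ) ((2:ℝ) ^ k), 1 / F s ^ 2) ≤ I := by
          rw [hI]
          apply MeasureTheory.setIntegral_mono_set hFint
            (Filter.Eventually.of_forall fun x => by positivity)
          exact HasSubset.Subset.eventuallyLE (fun x hx => hx.1)
        have h3 := mul_le_mul_of_nonneg_left h2 (show (0:ℝ) ≤ 2 / C ^ 2 by positivity)
        linarith
  linarith
end
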